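/- arXiv:2008.06903 — 2 statements merged into one kernel-verified Lean document; each statement's English description precedes it below -/
import Mathlib

section
/- Define E_{N,c}(x) = h Σ_{i=1}^{M} H(u_{0,i−1/2}/(D_h x)_{i−1/2})·(D_h x)_{i−1/2} + ⟨u₀, V_c∘x⟩_E + (1/2)⟨u₀, w_c[x]⟩_E for x ∈ Q, and E_{N,e}(x) = ⟨u₀, V_e∘x⟩_E + (1/2)⟨u₀, w_e[x]⟩_E for x ∈ ℝ^{M+1}, where (V_c∘x)_i = V_c(x_i) and (V_e∘x)_i = V_e(x_i). Then E_{N,c} is convex on the convex set Q and E_{N,e} is convex on ℝ^{M+1}; consequently the discrete total energy E_N = E_{N,c} − E_{N,e} is a difference of two convex functionals of the trajectory x. -/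
open Finset Filter

noncomputable section

/-- Forward difference onto cells: `(D_h l)_{i-1/2} = (l_i - l_{i-1})/h` (use index `i`, `1 ≤ i ≤ M`). -/
def DhOp (h : ℝ) (l : ℕ → ℝ) (i : ℕ) : ℝ := (l i - l (i - 1)) / h

/-- Difference of a cell function back onto nodes: `(d_h φ)_i = (φ_{i+1/2} - φ_{i-1/2})/h`;
a cell function `φ` is encoded by `φ i = φ_{i-1/2}`. -/
def dhOp (h : ℝ) (φ : ℕ → ℝ) (i : ℕ) : ℝ := (φ (i + 1) - φ i) / h

/-- Central difference `D̃_h` on nodes. -/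
def DtOp (M : ℕ) (h : ℝ) (l : ℕ → ℝ) (i : ℕ) : ℝ :=
  if i = 0 then (l 1 - l 0) / h
  else if i = M then (l M - l (M - 1)) / h
  else (l (i + 1) - l (i - 1)) / (2 * h)

/-- Node inner product `⟨l, g⟩_E`. -/
def ipE (M : ℕ) (h : ℝ) (l g : ℕ → ℝ) : ℝ :=
  h * (l 0 * g 0 / 2 + (∑ i ∈ Finset.Ioo 0 M, l i * g i) + l M * g M / 2)

/-- Cell inner product `⟨φ, ψ⟩_C`. -/
def ipC (M : ℕ) (h : ℝ) (φ ψ : ℕ → ℝ) : ℝ :=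
  h * ∑ i ∈ Finset.Icc 1 M, φ i * ψ i

/-- The admissible (ordered) set `Q`. -/
def inQ (M : ℕ) (X0 XM : ℝ) (l : ℕ → ℝ) : Prop :=
  l 0 = X0 ∧ l M = XM ∧ ∀ i, 1 ≤ i → i ≤ M → l (i - 1) < l i

/-- The closure `Q̄` of the admissible set. -/
def inQbar (M : ℕ) (X0 XM : ℝ) (l : ℕ → ℝ) : Prop :=
  l 0 = X0 ∧ l M = XM ∧ ∀ i, 1 ≤ i → i ≤ M → l (i - 1) ≤ l i

/-- `Ŝ[x]_i = ⟨K(x_i - y), u₀(Y)⟩_E` for a kernel `K` (e.g. `K = W_c'`);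
also used as `w[x]_i` when `K = W` itself. -/
def Shat (M : ℕ) (h : ℝ) (K : ℝ → ℝ) (u0 x : ℕ → ℝ) (i : ℕ) : ℝ :=
  ipE M h (fun j => K (x i - x j)) u0

/-- The cell function `G[x]_{i-1/2} = s·H'(s) - H(s)`, `s = u_{0,i-1/2}/(D_h x)_{i-1/2}`. -/
def Gcell (h : ℝ) (H : ℝ → ℝ) (u0half x : ℕ → ℝ) (i : ℕ) : ℝ :=
  u0half i / DhOp h x i * deriv H (u0half i / DhOp h x i) - H (u0half i / DhOp h x i)

/-- The mobility coefficient `c[x]_i = u_{0,i}² / ((D̃_h x)_i · f(u_{0,i}/(D̃_h x)_i))`. -/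
def cCoef (M : ℕ) (h : ℝ) (f : ℝ → ℝ) (u0 x : ℕ → ℝ) (i : ℕ) : ℝ :=
  u0 i ^ 2 / (DtOp M h x i * f (u0 i / DtOp M h x i))

/-- `xp` is a scheme update of `x`: the fully discrete convex-splitting scheme equations. -/
def SchemeUpdate (M : ℕ) (h τ : ℝ) (H f Vc Ve Wc We : ℝ → ℝ)
    (u0 u0half x xp : ℕ → ℝ) : Prop :=
  ∀ i, 1 ≤ i → i ≤ M - 1 →
    cCoef M h f u0 x i * (xp i - x i) / τ =
      -dhOp h (Gcell h H u0half xp) i - u0 i * deriv Vc (xp i)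
        + u0 i * deriv Ve (x i)
        - u0 i * Shat M h (deriv Wc) u0 xp i + u0 i * Shat M h (deriv We) u0 x i

/-- The discrete total energy `E_N`. -/
def EN (M : ℕ) (h : ℝ) (H V W : ℝ → ℝ) (u0 u0half x : ℕ → ℝ) : ℝ :=
  h * ∑ i ∈ Finset.Icc 1 M, H (u0half i / DhOp h x i) * DhOp h x i
    + ipE M h u0 (fun i => V (x i))
    + 1 / 2 * ipE M h u0 (fun i => Shat M h W u0 x i)

/-- The convex part `E_{N,c}` of the discrete total energy. -/
def ENc (M : ℕ) (h : ℝ) (H Vc Wc : ℝ → ℝ) (u0 u0half x : ℕ → ℝ) : ℝ :=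
  h * ∑ i ∈ Finset.Icc 1 M, H (u0half i / DhOp h x i) * DhOp h x i
    + ipE M h u0 (fun i => Vc (x i))
    + 1 / 2 * ipE M h u0 (fun i => Shat M h Wc u0 x i)

/-- The concave (subtracted convex) part `E_{N,e}` of the discrete total energy. -/
def ENe (M : ℕ) (h : ℝ) (Ve We : ℝ → ℝ) (u0 x : ℕ → ℝ) : ℝ :=
  ipE M h u0 (fun i => Ve (x i)) + 1 / 2 * ipE M h u0 (fun i => Shat M h We u0 x i)

/-- The convex functional `J` whose minimizer over `Q` is the scheme update of `xn`. -/
def Jfun (M : ℕ) (h τ : ℝ) (H f Vc Ve Wc We : ℝ → ℝ)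
    (u0 u0half xn z : ℕ → ℝ) : ℝ :=
  1 / (2 * τ) * ipE M h (fun i => cCoef M h f u0 xn i * (z i - xn i)) (fun i => z i - xn i)
    + h * ∑ i ∈ Finset.Icc 1 M, H (u0half i / DhOp h z i) * DhOp h z i
    + ipE M h u0 (fun i => Vc (z i))
    + 1 / 2 * ipE M h u0 (fun i => Shat M h Wc u0 z i)
    - ipE M h (fun i => u0 i * deriv Ve (xn i)) z
    - ipE M h (fun i => u0 i * Shat M h (deriv We) u0 xn i) z


section AuxLemmas

lemma ipE_comm (M : ℕ) (h : ℝ) (l g : ℕ → ℝ) : ipE M h l g = ipE M h g l := by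
  simp only [ipE, mul_comm]

lemma aux_const_mul {s : Set (ℕ → ℝ)} {f : (ℕ → ℝ) → ℝ} {c : ℝ} (hc : 0 ≤ c)
    (hf : ConvexOn ℝ s f) : ConvexOn ℝ s (fun x => c * f x) := by
  simpa [smul_eq_mul] using hf.smul hc

lemma aux_sum_convex {ι : Type*} (t : Finset ι) {s : Set (ℕ → ℝ)} (hs : Convex ℝ s)
    (f : ι → (ℕ → ℝ) → ℝ) (hf : ∀ i ∈ t, ConvexOn ℝ s (f i)) :
    ConvexOn ℝ s (fun x => ∑ i ∈ t, f i x) := by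
  classical
  induction t using Finset.induction with
  | empty => simpa using convexOn_const 0 hs
  | @insert a t ha ih =>
    simp only [Finset.sum_insert ha]
    exact (hf a (Finset.mem_insert_self a t)).add
      (ih fun i hi => hf i (Finset.mem_insert_of_mem hi))

lemma aux_comp_sub {g : ℝ → ℝ} (hg : ConvexOn ℝ Set.univ g) {s : Set (ℕ → ℝ)}
    (hs : Convex ℝ s) (i j : ℕ) : ConvexOn ℝ s (fun x : ℕ → ℝ => g (x i - x j)) := by
  refine ⟨hs, fun x _ y _ a b ha hb hab => ?_⟩
  have hkey := hg.2 (Set.mem_univ (x i - x j)) (Set.mem_univ (y i - y j)) ha hb hab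
  have h1 : (a • x + b • y) i - (a • x + b • y) j = a • (x i - x j) + b • (y i - y j) := by
    simp [smul_eq_mul]; ring
  simpa only [h1] using hkey

lemma aux_comp_eval {g : ℝ → ℝ} (hg : ConvexOn ℝ Set.univ g) {s : Set (ℕ → ℝ)}
    (hs : Convex ℝ s) (i : ℕ) : ConvexOn ℝ s (fun x : ℕ → ℝ => g (x i)) := by
  refine ⟨hs, fun x _ y _ a b ha hb hab => ?_⟩
  have hkey := hg.2 (Set.mem_univ (x i)) (Set.mem_univ (y i)) ha hb hab
  have h1 : (a • x + b • y) i = a • (x i) + b • (y i) := by simp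
  simpa only [h1] using hkey

lemma convexOn_ipE_node (M : ℕ) {h : ℝ} (hh : 0 ≤ h) {u0 : ℕ → ℝ}
    (hu : ∀ i ≤ M, 0 ≤ u0 i) {s : Set (ℕ → ℝ)} (hs : Convex ℝ s)
    (g : (ℕ → ℝ) → ℕ → ℝ) (hg : ∀ i ≤ M, ConvexOn ℝ s (fun x => g x i)) :
    ConvexOn ℝ s (fun x => ipE M h u0 (g x)) := by
  refine ⟨hs, fun x hx y hy a b ha hb hab => ?_⟩
  have key : ∀ i ≤ M, g (a • x + b • y) i ≤ a * g x i + b * g y i := by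
    intro i hi
    simpa [smul_eq_mul] using (hg i hi).2 hx hy ha hb hab
  have h0 := key 0 (Nat.zero_le M)
  have hMM := key M le_rfl
  have hu00 := hu 0 (Nat.zero_le M)
  have huM := hu M le_rfl
  have hsum : ∑ i ∈ Finset.Ioo 0 M, u0 i * g (a • x + b • y) i
      ≤ a * ∑ i ∈ Finset.Ioo 0 M, u0 i * g x i
        + b * ∑ i ∈ Finset.Ioo 0 M, u0 i * g y i := by
    rw [Finset.mul_sum, Finset.mul_sum, ← Finset.sum_add_distrib]
    refine Finset.sum_le_sum fun i hi => ?_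
    have hiM : i ≤ M := (Finset.mem_Ioo.mp hi).2.le
    have hk := key i hiM
    have hui := hu i hiM
    nlinarith [mul_le_mul_of_nonneg_left hk hui]
  simp only [ipE, smul_eq_mul]
  have inner : u0 0 * g (a • x + b • y) 0 / 2
        + (∑ i ∈ Finset.Ioo 0 M, u0 i * g (a • x + b • y) i)
        + u0 M * g (a • x + b • y) M / 2
      ≤ a * (u0 0 * g x 0 / 2 + (∑ i ∈ Finset.Ioo 0 M, u0 i * g x i) + u0 M * g x M / 2)
        + b * (u0 0 * g y 0 / 2 + (∑ i ∈ Finset.Ioo 0 M, u0 i * g y i) + u0 M * g y M / 2) := by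
    nlinarith [mul_le_mul_of_nonneg_left h0 hu00, mul_le_mul_of_nonneg_left hMM huM, hsum]
  calc h * (u0 0 * g (a • x + b • y) 0 / 2
        + (∑ i ∈ Finset.Ioo 0 M, u0 i * g (a • x + b • y) i)
        + u0 M * g (a • x + b • y) M / 2)
      ≤ h * (a * (u0 0 * g x 0 / 2 + (∑ i ∈ Finset.Ioo 0 M, u0 i * g x i) + u0 M * g x M / 2)
        + b * (u0 0 * g y 0 / 2 + (∑ i ∈ Finset.Ioo 0 M, u0 i * g y i) + u0 M * g y M / 2)) :=
        mul_le_mul_of_nonneg_left inner hh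
    _ = a * (h * (u0 0 * g x 0 / 2 + (∑ i ∈ Finset.Ioo 0 M, u0 i * g x i) + u0 M * g x M / 2))
        + b * (h * (u0 0 * g y 0 / 2 + (∑ i ∈ Finset.Ioo 0 M, u0 i * g y i) + u0 M * g y M / 2)) := by
        ring

lemma perspective_convex {H : ℝ → ℝ} (hH : ConvexOn ℝ (Set.Ioi 0) H) {c : ℝ} (hc : 0 < c) :
    ConvexOn ℝ (Set.Ioi (0:ℝ)) (fun s => H (c / s) * s) := by
  refine ⟨convex_Ioi 0, fun s hs t ht a b ha hb hab => ?_⟩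
  have hs' : (0:ℝ) < s := hs
  have ht' : (0:ℝ) < t := ht
  have hu' : 0 < a * s + b * t := by
    rcases ha.lt_or_eq with h' | h'
    · nlinarith
    · have hb1 : b = 1 := by linarith
      rw [← h', hb1]; simpa using ht'
  have hα : 0 ≤ a * s / (a * s + b * t) := by positivity
  have hβ : 0 ≤ b * t / (a * s + b * t) := by positivity
  have hsum : a * s / (a * s + b * t) + b * t / (a * s + b * t) = 1 := by
    field_simp
  have hkey := hH.2 (show c / s ∈ Set.Ioi (0:ℝ) from div_pos hc hs')
    (show c / t ∈ Set.Ioi (0:ℝ) from div_pos hc ht') hα hβ hsum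
  have e1 : (a * s / (a * s + b * t)) * (c / s) = a * c / (a * s + b * t) := by
    field_simp
  have e2 : (b * t / (a * s + b * t)) * (c / t) = b * c / (a * s + b * t) := by
    field_simp
  have harg : (a * s / (a * s + b * t)) • (c / s) + (b * t / (a * s + b * t)) • (c / t)
      = c / (a * s + b * t) := by
    rw [smul_eq_mul, smul_eq_mul, e1, e2, ← add_div]
    congr 1
    linear_combination c * hab
  rw [harg] at hkey
  have h2 := mul_le_mul_of_nonneg_right hkey hu'.le
  have h3 : ((a * s / (a * s + b * t)) • H (c / s) + (b * t / (a * s + b * t)) • H (c / t))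
      * (a * s + b * t) = a * (H (c / s) * s) + b * (H (c / t) * t) := by
    rw [smul_eq_mul, smul_eq_mul]
    field_simp
  rw [h3] at h2
  simpa [smul_eq_mul] using h2

lemma convex_Qset (M : ℕ) (X0 XM : ℝ) : Convex ℝ {l : ℕ → ℝ | inQ M X0 XM l} := by
  intro x hx y hy a b ha hb hab
  obtain ⟨hx0, hxM, hxi⟩ := hx
  obtain ⟨hy0, hyM, hyi⟩ := hy
  refine ⟨?_, ?_, ?_⟩
  · simp only [Pi.add_apply, Pi.smul_apply, smul_eq_mul, hx0, hy0]
    linear_combination X0 * hab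
  · simp only [Pi.add_apply, Pi.smul_apply, smul_eq_mul, hxM, hyM]
    linear_combination XM * hab
  · intro i h1 h2
    have dx := hxi i h1 h2
    have dy := hyi i h1 h2
    simp only [Pi.add_apply, Pi.smul_apply, smul_eq_mul]
    rcases ha.lt_or_eq with h' | h'
    · have e1 := mul_lt_mul_of_pos_left dx h'
      have e2 := mul_le_mul_of_nonneg_left dy.le hb
      linarith
    · have hb1 : b = 1 := by linarith
      rw [← h', hb1]; simpa using dy

end AuxLemmas

/-- `E_{N,c}` is convex on `Q`, `E_{N,e}` is convex on all of `ℝ^{M+1}`, and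
`E_N = E_{N,c} - E_{N,e}`. -/
theorem discrete_energy_convex_splitting
    (M : ℕ) (hM : 2 ≤ M) (X0 XM : ℝ) (hX : X0 < XM)
    (h : ℝ) (hh : h = (XM - X0) / (M : ℝ)) (τ : ℝ) (hτ : 0 < τ)
    (H f Vc Ve Wc We : ℝ → ℝ)
    (hHconv : ConvexOn ℝ (Set.Ioi 0) H) (hHreg : ContDiffOn ℝ 1 H (Set.Ioi 0))
    (hf : ∀ s : ℝ, 0 < s → 0 < f s)
    (hVcconv : ConvexOn ℝ Set.univ Vc) (hVcreg : ContDiff ℝ 1 Vc)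
    (hVeconv : ConvexOn ℝ Set.univ Ve) (hVereg : ContDiff ℝ 1 Ve)
    (hWcconv : ConvexOn ℝ Set.univ Wc) (hWcreg : ContDiff ℝ 1 Wc)
    (hWeconv : ConvexOn ℝ Set.univ We) (hWereg : ContDiff ℝ 1 We)
    (hWceven : ∀ s : ℝ, Wc (-s) = Wc s) (hWeeven : ∀ s : ℝ, We (-s) = We s)
    (u0 u0half : ℕ → ℝ)
    (hu0 : ∀ i ≤ M, 0 < u0 i)
    (hu0half : ∀ i, 1 ≤ i → i ≤ M → 0 < u0half i)
 :
    ConvexOn ℝ {l : ℕ → ℝ | inQ M X0 XM l} (ENc M h H Vc Wc u0 u0half)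
    ∧ ConvexOn ℝ Set.univ (ENe M h Ve We u0)
    ∧ ∀ x : ℕ → ℝ,
        EN M h H (fun s => Vc s - Ve s) (fun s => Wc s - We s) u0 u0half x
          = ENc M h H Vc Wc u0 u0half x - ENe M h Ve We u0 x := by
  have hMpos : (0:ℝ) < (M : ℝ) := by exact_mod_cast Nat.pos_of_ne_zero (by omega)
  have hpos : 0 < h := by
    rw [hh]; exact div_pos (by linarith) hMpos
  have hu0nn : ∀ i ≤ M, 0 ≤ u0 i := fun i hi => (hu0 i hi).le
  have hQconv := convex_Qset M X0 XM
  -- convexity of E_{N,c}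
  have hterm : ∀ i ∈ Finset.Icc 1 M,
      ConvexOn ℝ {l : ℕ → ℝ | inQ M X0 XM l}
        (fun x => H (u0half i / DhOp h x i) * DhOp h x i) := by
    intro i hi
    obtain ⟨hi1, hi2⟩ := Finset.mem_Icc.mp hi
    have hp := perspective_convex hHconv (hu0half i hi1 hi2)
    refine ⟨hQconv, fun x hx y hy a b ha hb hab => ?_⟩
    have hdx : DhOp h x i ∈ Set.Ioi (0:ℝ) :=
      div_pos (sub_pos.mpr (hx.2.2 i hi1 hi2)) hpos
    have hdy : DhOp h y i ∈ Set.Ioi (0:ℝ) :=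
      div_pos (sub_pos.mpr (hy.2.2 i hi1 hi2)) hpos
    have hk := hp.2 hdx hdy ha hb hab
    simp only [smul_eq_mul] at hk
    have hlin : DhOp h (a • x + b • y) i = a * DhOp h x i + b * DhOp h y i := by
      simp only [DhOp, Pi.add_apply, Pi.smul_apply, smul_eq_mul]; ring
    show H (u0half i / DhOp h (a • x + b • y) i) * DhOp h (a • x + b • y) i
      ≤ a • (H (u0half i / DhOp h x i) * DhOp h x i)
        + b • (H (u0half i / DhOp h y i) * DhOp h y i)
    rw [hlin]
    simpa only [smul_eq_mul] using hk
  have hA : ConvexOn ℝ {l : ℕ → ℝ | inQ M X0 XM l}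
      (fun x => h * ∑ i ∈ Finset.Icc 1 M, H (u0half i / DhOp h x i) * DhOp h x i) :=
    aux_const_mul hpos.le (aux_sum_convex _ hQconv _ hterm)
  have hB : ConvexOn ℝ {l : ℕ → ℝ | inQ M X0 XM l}
      (fun x => ipE M h u0 (fun i => Vc (x i))) :=
    convexOn_ipE_node M hpos.le hu0nn hQconv _ (fun i _ => aux_comp_eval hVcconv hQconv i)
  have hCinner : ∀ i ≤ M, ConvexOn ℝ {l : ℕ → ℝ | inQ M X0 XM l}
      (fun x => Shat M h Wc u0 x i) := by
    intro i _
    have heq : (fun x : ℕ → ℝ => Shat M h Wc u0 x i)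
        = fun x => ipE M h u0 (fun j => Wc (x i - x j)) := by
      funext x; rw [Shat, ipE_comm]
    rw [heq]
    exact convexOn_ipE_node M hpos.le hu0nn hQconv _
      (fun j _ => aux_comp_sub hWcconv hQconv i j)
  have hC : ConvexOn ℝ {l : ℕ → ℝ | inQ M X0 XM l}
      (fun x => 1 / 2 * ipE M h u0 (fun i => Shat M h Wc u0 x i)) :=
    aux_const_mul (by norm_num) (convexOn_ipE_node M hpos.le hu0nn hQconv _ hCinner)
  -- convexity of E_{N,e}
  have hB' : ConvexOn ℝ (Set.univ : Set (ℕ → ℝ))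
      (fun x => ipE M h u0 (fun i => Ve (x i))) :=
    convexOn_ipE_node M hpos.le hu0nn convex_univ _
      (fun i _ => aux_comp_eval hVeconv convex_univ i)
  have hCinner' : ∀ i ≤ M, ConvexOn ℝ (Set.univ : Set (ℕ → ℝ))
      (fun x => Shat M h We u0 x i) := by
    intro i _
    have heq : (fun x : ℕ → ℝ => Shat M h We u0 x i)
        = fun x => ipE M h u0 (fun j => We (x i - x j)) := by
      funext x; rw [Shat, ipE_comm]
    rw [heq]
    exact convexOn_ipE_node M hpos.le hu0nn convex_univ _
      (fun j _ => aux_comp_sub hWeconv convex_univ i j)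
  have hC' : ConvexOn ℝ (Set.univ : Set (ℕ → ℝ))
      (fun x => 1 / 2 * ipE M h u0 (fun i => Shat M h We u0 x i)) :=
    aux_const_mul (by norm_num)
      (convexOn_ipE_node M hpos.le hu0nn convex_univ _ hCinner')
  refine ⟨(hA.add hB).add hC, hB'.add hC', fun x => ?_⟩
  -- the splitting identity
  have shat_split : (fun i => Shat M h (fun s => Wc s - We s) u0 x i)
      = fun i => Shat M h Wc u0 x i - Shat M h We u0 x i := by
    funext i
    simp only [Shat, ipE, sub_mul, Finset.sum_sub_distrib]
    ring
  have ipE_sub : ∀ g1 g2 : ℕ → ℝ,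
      ipE M h u0 (fun i => g1 i - g2 i) = ipE M h u0 g1 - ipE M h u0 g2 := by
    intro g1 g2
    simp only [ipE, mul_sub, Finset.sum_sub_distrib]
    ring
  simp only [EN, ENc, ENe]
  rw [shat_split, ipE_sub (fun i => Vc (x i)) (fun i => Ve (x i)),
    ipE_sub (fun i => Shat M h Wc u0 x i) (fun i => Shat M h We u0 x i)]
  ring
end
end

section
/- Define E_{N,c}(x) = h Σ_{i=1}^{M} H(u_{0,i−1/2}/(D_h x)_{i−1/2})·(D_h x)_{i−1/2} + ⟨u₀, V_c∘x⟩_E + (1/2)⟨u₀, w_c[x]⟩_E for x ∈ Q, where (V_c∘x)_i = V_c(x_i). Then for every x ∈ Q, E_{N,c} is differentiable at x (with respect to the interior variables x₁, …, x_{M−1}) and, for every 1 ≤ i ≤ M−1, ∂E_{N,c}/∂x_i (x) = h·[(d_h G[x])_i + u_{0,i}·V_c′(x_i) + u_{0,i}·Ŝ_c[x]_i]; equivalently, the first variation of E_{N,c} with respect to the inner product ⟨·,·⟩_E is (δ_x E_{N,c}(x))_i = (d_h G[x])_i + u_{0,i}·V_c′(x_i) + u_{0,i}·Ŝ_c[x]_i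 for 1 ≤ i ≤ M−1. (Formula (4.4).) -/
open Finset Filter

noncomputable section

def trapWt (M j : ℕ) : ℝ := if j = 0 ∨ j = M then 1/2 else 1

lemma ipE_eq (M : ℕ) (hM : 1 ≤ M) (h : ℝ) (l g : ℕ → ℝ) :
    ipE M h l g = h * ∑ j ∈ Finset.Icc 0 M, trapWt M j * (l j * g j) := by
  have h0 : (0:ℕ) ∉ insert M (Finset.Ioo 0 M) := by simp; omega
  have hM' : M ∉ Finset.Ioo 0 M := by simp
  have hset : Finset.Icc 0 M = insert 0 (insert M (Finset.Ioo 0 M)) := by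
    ext j; simp [Finset.mem_Icc, Finset.mem_Ioo, Finset.mem_insert]; omega
  have hcg : ∀ j ∈ Finset.Ioo 0 M, trapWt M j * (l j * g j) = l j * g j := by
    intro j hj
    simp only [Finset.mem_Ioo] at hj
    rw [trapWt, if_neg (by omega)]; ring
  rw [ipE, hset, Finset.sum_insert h0, Finset.sum_insert hM', Finset.sum_congr rfl hcg]
  rw [trapWt, if_pos (Or.inl rfl), trapWt, if_pos (Or.inr rfl)]
  ring

lemma deriv_odd_of_even (W : ℝ → ℝ) (hW : ContDiff ℝ 1 W) (he : ∀ s : ℝ, W (-s) = W s)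
    (t : ℝ) : deriv W (-t) = -deriv W t := by
  have hd := hW.differentiable one_ne_zero
  have h1 : HasDerivAt (fun s : ℝ => W (-s)) (deriv W (-t) * (-1)) t :=
    (hd (-t)).hasDerivAt.comp t (hasDerivAt_neg t)
  have h2 : HasDerivAt W (deriv W (-t) * (-1)) t := by
    have : (fun s : ℝ => W (-s)) = W := funext he
    rwa [this] at h1
  have := h2.unique (hd t).hasDerivAt
  linarith

lemma hasDerivAt_ite_sub (i j k : ℕ) (x : ℕ → ℝ) (t : ℝ) :
    HasDerivAt (fun s : ℝ => (if j = i then s else x j) - (if k = i then s else x k))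
      ((if j = i then (1:ℝ) else 0) - (if k = i then (1:ℝ) else 0)) t := by
  have h1 : ∀ m : ℕ, HasDerivAt (fun s : ℝ => if m = i then s else x m)
      (if m = i then (1:ℝ) else 0) t := by
    intro m
    by_cases hm : m = i
    · simpa [hm] using hasDerivAt_id' t
    · simpa [hm] using hasDerivAt_const t (x m)
  exact (h1 j).sub (h1 k)

/-- Formula (4.4): the partial derivative of `E_{N,c}` with respect to an interior node
`x_i` is `h·[(d_h G[x])_i + u_{0,i}·V_c'(x_i) + u_{0,i}·Ŝ_c[x]_i]`. -/
theorem ENc_first_variation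
    (M : ℕ) (hM : 2 ≤ M) (X0 XM : ℝ) (hX : X0 < XM)
    (h : ℝ) (hh : h = (XM - X0) / (M : ℝ)) (τ : ℝ) (hτ : 0 < τ)
    (H f Vc Ve Wc We : ℝ → ℝ)
    (hHconv : ConvexOn ℝ (Set.Ioi 0) H) (hHreg : ContDiffOn ℝ 1 H (Set.Ioi 0))
    (hf : ∀ s : ℝ, 0 < s → 0 < f s)
    (hVcconv : ConvexOn ℝ Set.univ Vc) (hVcreg : ContDiff ℝ 1 Vc)
    (hVeconv : ConvexOn ℝ Set.univ Ve) (hVereg : ContDiff ℝ 1 Ve)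
    (hWcconv : ConvexOn ℝ Set.univ Wc) (hWcreg : ContDiff ℝ 1 Wc)
    (hWeconv : ConvexOn ℝ Set.univ We) (hWereg : ContDiff ℝ 1 We)
    (hWceven : ∀ s : ℝ, Wc (-s) = Wc s) (hWeeven : ∀ s : ℝ, We (-s) = We s)
    (u0 u0half : ℕ → ℝ)
    (hu0 : ∀ i ≤ M, 0 < u0 i)
    (hu0half : ∀ i, 1 ≤ i → i ≤ M → 0 < u0half i)
    (x : ℕ → ℝ) (hx : inQ M X0 XM x) :
    ∀ i, 1 ≤ i → i ≤ M - 1 →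
      HasDerivAt (fun s => ENc M h H Vc Wc u0 u0half (Function.update x i s))
        (h * (dhOp h (Gcell h H u0half x) i + u0 i * deriv Vc (x i)
          + u0 i * Shat M h (deriv Wc) u0 x i))
        (x i) := by
  intro i hi1 hi2
  have hMpos : 0 < M := by omega
  have hh0 : 0 < h := by
    rw [hh]
    apply div_pos (by linarith) (by exact_mod_cast hMpos)
  have hhne : h ≠ 0 := ne_of_gt hh0
  have hiM : i < M := by omega
  have hmono := hx.2.2
  have hxi : x (i - 1) < x i := hmono i hi1 (le_of_lt hiM)
  have hxi1 : x i < x (i + 1) := by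
    have := hmono (i + 1) (by omega) (by omega)
    simpa using this
  have hiIcc : i ∈ Finset.Icc 0 M := Finset.mem_Icc.mpr ⟨Nat.zero_le i, le_of_lt hiM⟩
  have htwi : trapWt M i = 1 := by rw [trapWt, if_neg (by omega)]
  have hHd : ∀ t : ℝ, 0 < t → HasDerivAt H (deriv H t) t := fun t ht =>
    ((hHreg.differentiableOn one_ne_zero).differentiableAt (Ioi_mem_nhds ht)).hasDerivAt
  have hVcd := hVcreg.differentiable one_ne_zero
  have hWcd := hWcreg.differentiable one_ne_zero
  have hodd : ∀ t : ℝ, deriv Wc (-t) = -deriv Wc t := deriv_odd_of_even Wc hWcreg hWceven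
  have hW0 : deriv Wc 0 = 0 := by
    have := hodd 0
    simp only [neg_zero] at this
    linarith
  -- Part A : entropy term
  have hA : HasDerivAt
      (fun s => h * ∑ j ∈ Finset.Icc 1 M,
        H (u0half j / DhOp h (Function.update x i s) j) * DhOp h (Function.update x i s) j)
      (h * (-Gcell h H u0half x i / h + Gcell h H u0half x (i + 1) / h)) (x i) := by
    refine HasDerivAt.const_mul h ?_
    have hsum : HasDerivAt
        (fun s => ∑ j ∈ Finset.Icc 1 M,
          H (u0half j / DhOp h (Function.update x i s) j) * DhOp h (Function.update x i s) j)
        (∑ j ∈ Finset.Icc 1 M, ((if j = i then -Gcell h H u0half x i / h else 0)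
          + (if j = i + 1 then Gcell h H u0half x (i + 1) / h else 0))) (x i) := by
      refine HasDerivAt.fun_sum ?_
      intro j hj
      rw [Finset.mem_Icc] at hj
      by_cases hji : j = i
      · subst hji
        have hfun : (fun s => H (u0half j / DhOp h (Function.update x j s) j)
              * DhOp h (Function.update x j s) j)
            = fun s => H (u0half j / ((s - x (j - 1)) / h)) * ((s - x (j - 1)) / h) := by
          funext s
          simp only [DhOp, Function.update_apply, eq_self_iff_true, if_true,
            if_neg (show ¬ (j - 1 = j) by omega)]
        rw [hfun]
        have hD : (0:ℝ) < (x j - x (j - 1)) / h := div_pos (by linarith) hh0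
        have hg : HasDerivAt (fun s : ℝ => (s - x (j - 1)) / h) (1 / h) (x j) := by
          simpa using ((hasDerivAt_id (x j)).sub_const (x (j - 1))).div_const h
        have hq : HasDerivAt (fun s : ℝ => u0half j / ((s - x (j - 1)) / h))
            ((0 * ((x j - x (j - 1)) / h) - u0half j * (1 / h)) / ((x j - x (j - 1)) / h) ^ 2)
            (x j) := (hasDerivAt_const (x j) (u0half j)).div hg (ne_of_gt hD)
        have hcpos : 0 < u0half j / ((x j - x (j - 1)) / h) :=
          div_pos (hu0half j hj.1 hj.2) hD
        have hcomp : HasDerivAt (fun s : ℝ => H (u0half j / ((s - x (j - 1)) / h)))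
            (deriv H (u0half j / ((x j - x (j - 1)) / h))
              * ((0 * ((x j - x (j - 1)) / h) - u0half j * (1 / h))
                / ((x j - x (j - 1)) / h) ^ 2)) (x j) := (hHd _ hcpos).comp (x j) hq
        have hmul : HasDerivAt
            (fun s : ℝ => H (u0half j / ((s - x (j - 1)) / h)) * ((s - x (j - 1)) / h))
            ((deriv H (u0half j / ((x j - x (j - 1)) / h))
              * ((0 * ((x j - x (j - 1)) / h) - u0half j * (1 / h))
                / ((x j - x (j - 1)) / h) ^ 2)) * ((x j - x (j - 1)) / h)
             + H (u0half j / ((x j - x (j - 1)) / h)) * (1 / h)) (x j) := hcomp.mul hg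
        refine hmul.congr_deriv (Eq.symm ?_)
        simp only [eq_self_iff_true, if_true, if_neg (show ¬ j = j + 1 by omega), Gcell, DhOp]
        have hne : x j - x (j - 1) ≠ 0 := by linarith
        field_simp
        ring
      · by_cases hji1 : j = i + 1
        · subst hji1
          have hfun : (fun s => H (u0half (i + 1) / DhOp h (Function.update x i s) (i + 1))
                * DhOp h (Function.update x i s) (i + 1))
              = fun s => H (u0half (i + 1) / ((x (i + 1) - s) / h)) * ((x (i + 1) - s) / h) := by
            funext s
            simp only [DhOp, Nat.add_sub_cancel, Function.update_apply, eq_self_iff_true,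
              if_true, if_neg (show ¬ (i + 1 = i) by omega)]
          rw [hfun]
          have hD : (0:ℝ) < (x (i + 1) - x i) / h := div_pos (by linarith) hh0
          have hg : HasDerivAt (fun s : ℝ => (x (i + 1) - s) / h) (-1 / h) (x i) := by
            simpa using ((hasDerivAt_id (x i)).const_sub (x (i + 1))).div_const h
          have hq : HasDerivAt (fun s : ℝ => u0half (i + 1) / ((x (i + 1) - s) / h))
              ((0 * ((x (i + 1) - x i) / h) - u0half (i + 1) * (-1 / h))
                / ((x (i + 1) - x i) / h) ^ 2) (x i) :=
            (hasDerivAt_const (x i) (u0half (i + 1))).div hg (ne_of_gt hD)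
          have hcpos : 0 < u0half (i + 1) / ((x (i + 1) - x i) / h) :=
            div_pos (hu0half (i + 1) (by omega) (by omega)) hD
          have hcomp : HasDerivAt (fun s : ℝ => H (u0half (i + 1) / ((x (i + 1) - s) / h)))
              (deriv H (u0half (i + 1) / ((x (i + 1) - x i) / h))
                * ((0 * ((x (i + 1) - x i) / h) - u0half (i + 1) * (-1 / h))
                  / ((x (i + 1) - x i) / h) ^ 2)) (x i) := (hHd _ hcpos).comp (x i) hq
          have hmul : HasDerivAt
              (fun s : ℝ => H (u0half (i + 1) / ((x (i + 1) - s) / h)) * ((x (i + 1) - s) / h))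
              ((deriv H (u0half (i + 1) / ((x (i + 1) - x i) / h))
                * ((0 * ((x (i + 1) - x i) / h) - u0half (i + 1) * (-1 / h))
                  / ((x (i + 1) - x i) / h) ^ 2)) * ((x (i + 1) - x i) / h)
               + H (u0half (i + 1) / ((x (i + 1) - x i) / h)) * (-1 / h)) (x i) := hcomp.mul hg
          refine hmul.congr_deriv (Eq.symm ?_)
          simp only [eq_self_iff_true, if_true, if_neg (show ¬ i + 1 = i by omega), Gcell, DhOp,
            Nat.add_sub_cancel]
          have hne : x (i + 1) - x i ≠ 0 := by linarith
          field_simp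
          ring
        · have hfun : (fun s => H (u0half j / DhOp h (Function.update x i s) j)
                * DhOp h (Function.update x i s) j)
              = fun _ => H (u0half j / DhOp h x j) * DhOp h x j := by
            funext s
            simp only [DhOp, Function.update_apply, if_neg hji,
              if_neg (show ¬ (j - 1 = i) by omega)]
          rw [hfun]
          simpa [hji, hji1] using
            hasDerivAt_const (x i) (H (u0half j / DhOp h x j) * DhOp h x j)
    refine hsum.congr_deriv (Eq.symm ?_)
    rw [Finset.sum_add_distrib, Finset.sum_ite_eq' (Finset.Icc 1 M) i,
      Finset.sum_ite_eq' (Finset.Icc 1 M) (i + 1)]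
    rw [if_pos (Finset.mem_Icc.mpr ⟨hi1, le_of_lt hiM⟩),
      if_pos (Finset.mem_Icc.mpr ⟨by omega, by omega⟩)]
  -- Part B : potential term
  have hB : HasDerivAt (fun s => ipE M h u0 (fun j => Vc (Function.update x i s j)))
      (h * (u0 i * deriv Vc (x i))) (x i) := by
    have hfun : (fun s => ipE M h u0 (fun j => Vc (Function.update x i s j)))
        = fun s => h * ∑ j ∈ Finset.Icc 0 M,
            trapWt M j * (u0 j * Vc (if j = i then s else x j)) := by
      funext s
      rw [ipE_eq M (by omega) h]
      simp only [Function.update_apply]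
    rw [hfun]
    have hsum : HasDerivAt
        (fun s => ∑ j ∈ Finset.Icc 0 M, trapWt M j * (u0 j * Vc (if j = i then s else x j)))
        (∑ j ∈ Finset.Icc 0 M,
          if j = i then trapWt M i * (u0 i * deriv Vc (x i)) else 0) (x i) := by
      refine HasDerivAt.fun_sum ?_
      intro j _
      by_cases hji : j = i
      · subst hji
        simpa using (((hVcd (x j)).hasDerivAt).const_mul (u0 j)).const_mul (trapWt M j)
      · simp only [if_neg hji]
        exact hasDerivAt_const _ _
    have htot := hsum.const_mul h
    refine htot.congr_deriv (Eq.symm ?_)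
    rw [Finset.sum_ite_eq' (Finset.Icc 0 M) i
        (fun _ => trapWt M i * (u0 i * deriv Vc (x i))), if_pos hiIcc, htwi]
    ring
  -- Part C : interaction term
  have hC : HasDerivAt
      (fun s => 1 / 2 * ipE M h u0 (fun j => Shat M h Wc u0 (Function.update x i s) j))
      (h * (u0 i * Shat M h (deriv Wc) u0 x i)) (x i) := by
    have hShat : ∀ (y : ℕ → ℝ) (j : ℕ), Shat M h Wc u0 y j
        = h * ∑ k ∈ Finset.Icc 0 M, trapWt M k * (Wc (y j - y k) * u0 k) :=
      fun y j => ipE_eq M (by omega) h _ _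
    have hfun : (fun s => 1 / 2 * ipE M h u0 (fun j => Shat M h Wc u0 (Function.update x i s) j))
        = fun s => 1 / 2 * (h * ∑ j ∈ Finset.Icc 0 M, trapWt M j * (u0 j *
            (h * ∑ k ∈ Finset.Icc 0 M, trapWt M k *
              (Wc ((if j = i then s else x j) - (if k = i then s else x k)) * u0 k)))) := by
      funext s
      rw [ipE_eq M (by omega) h]
      simp only [hShat, Function.update_apply]
    rw [hfun]
    have hjk : ∀ j k : ℕ, HasDerivAt
        (fun s : ℝ => Wc ((if j = i then s else x j) - (if k = i then s else x k)))
        (deriv Wc (x j - x k) * ((if j = i then (1:ℝ) else 0) - (if k = i then (1:ℝ) else 0)))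
        (x i) := by
      intro j k
      have hin := hasDerivAt_ite_sub i j k x (x i)
      have hpt : ((if j = i then x i else x j) - (if k = i then x i else x k)) = x j - x k := by
        by_cases hj : j = i <;> by_cases hk : k = i <;> simp [hj, hk]
      have hW : HasDerivAt Wc (deriv Wc (x j - x k))
          ((if j = i then x i else x j) - (if k = i then x i else x k)) := by
        rw [hpt]; exact (hWcd _).hasDerivAt
      exact hW.comp (x i) hin
    have hsum : HasDerivAt
        (fun s => ∑ j ∈ Finset.Icc 0 M, trapWt M j * (u0 j *
          (h * ∑ k ∈ Finset.Icc 0 M, trapWt M k *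
            (Wc ((if j = i then s else x j) - (if k = i then s else x k)) * u0 k))))
        (∑ j ∈ Finset.Icc 0 M, trapWt M j * (u0 j *
          (h * ∑ k ∈ Finset.Icc 0 M, trapWt M k *
            ((deriv Wc (x j - x k)
              * ((if j = i then (1:ℝ) else 0) - (if k = i then (1:ℝ) else 0))) * u0 k))))
        (x i) := by
      refine HasDerivAt.fun_sum fun j _ => ?_
      refine HasDerivAt.const_mul _ ?_
      refine HasDerivAt.const_mul _ ?_
      refine HasDerivAt.const_mul _ ?_
      refine HasDerivAt.fun_sum fun k _ => ?_
      exact ((hjk j k).mul_const (u0 k)).const_mul (trapWt M k)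
    have htot := (hsum.const_mul h).const_mul (1 / 2 : ℝ)
    refine htot.congr_deriv (Eq.symm ?_)
    have hinner : ∀ j ∈ Finset.Icc 0 M,
        trapWt M j * (u0 j * (h * ∑ k ∈ Finset.Icc 0 M, trapWt M k *
          ((deriv Wc (x j - x k)
            * ((if j = i then (1:ℝ) else 0) - (if k = i then (1:ℝ) else 0))) * u0 k)))
        = (if j = i then h * (u0 i
              * ∑ k ∈ Finset.Icc 0 M, trapWt M k * (deriv Wc (x i - x k) * u0 k)) else 0)
          + h * (u0 i * (trapWt M j * (deriv Wc (x i - x j) * u0 j))) := by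
      intro j _
      by_cases hji : j = i
      · simp only [hji, eq_self_iff_true, if_true]
        have hk : ∀ k ∈ Finset.Icc 0 M,
            trapWt M k * ((deriv Wc (x i - x k) * ((1:ℝ) - (if k = i then (1:ℝ) else 0))) * u0 k)
            = trapWt M k * (deriv Wc (x i - x k) * u0 k)
              - (if k = i then trapWt M k * (deriv Wc (x i - x k) * u0 k) else 0) := by
          intro k _
          by_cases hk : k = i
          · simp only [hk, eq_self_iff_true, if_true]
            ring
          · simp only [if_neg hk]
            ring
        rw [Finset.sum_congr rfl hk, Finset.sum_sub_distrib,
          Finset.sum_ite_eq' (Finset.Icc 0 M) i, if_pos hiIcc]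
        rw [sub_self (x i), hW0, htwi]
        ring
      · simp only [if_neg hji]
        have hk : ∀ k ∈ Finset.Icc 0 M,
            trapWt M k * ((deriv Wc (x j - x k) * ((0:ℝ) - (if k = i then (1:ℝ) else 0))) * u0 k)
            = -(if k = i then trapWt M k * (deriv Wc (x j - x k) * u0 k) else 0) := by
          intro k _
          by_cases hk : k = i
          · simp only [hk, eq_self_iff_true, if_true]
            ring
          · simp only [if_neg hk]
            ring
        rw [Finset.sum_congr rfl hk, Finset.sum_neg_distrib,
          Finset.sum_ite_eq' (Finset.Icc 0 M) i, if_pos hiIcc, htwi]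
        have hsw : x j - x i = -(x i - x j) := by ring
        rw [hsw, hodd]
        ring
    rw [Finset.sum_congr rfl hinner, Finset.sum_add_distrib,
      Finset.sum_ite_eq' (Finset.Icc 0 M) i, if_pos hiIcc]
    simp only [← Finset.mul_sum]
    rw [Shat, ipE_eq M (by omega) h]
    ring
  have heq : h * (dhOp h (Gcell h H u0half x) i + u0 i * deriv Vc (x i)
        + u0 i * Shat M h (deriv Wc) u0 x i)
      = h * (-Gcell h H u0half x i / h + Gcell h H u0half x (i + 1) / h)
        + h * (u0 i * deriv Vc (x i)) + h * (u0 i * Shat M h (deriv Wc) u0 x i) := by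
    rw [dhOp]
    field_simp
    ring
  rw [heq]
  exact (hA.add hB).add hC
end
end
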